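/- Let A ∈ ℝ^{n×n}, E ∈ ℝ^{n×z}, and suppose there exist symmetric P ∈ ℝ^{n×n} and R ∈ ℝ^{n×n} such that the block matrix [[P − E Eᵀ, A R], [Rᵀ Aᵀ, R + Rᵀ − P]] is positive definite. Then the spectral radius of A is strictly less than 1 (A is Schur stable). -/

import Mathlib

open Matrix Complex
open scoped ComplexOrder

private lemma star_map_ofReal' {k l : Type*} (X : Matrix k l ℝ) (u : l → ℂ) [Fintype l] :
    (X.map (Complex.ofReal ·)) *ᵥ (star u) = star ((X.map (Complex.ofReal ·)) *ᵥ u) := by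
  funext i
  simp [mulVec, dotProduct, map_sum, mul_comm]

private lemma star_sum_elim' {k l : Type*} (x : k → ℂ) (y : l → ℂ) :
    star (Sum.elim x y) = Sum.elim (star x) (star y) := by
  funext i; cases i <;> rfl

private lemma posDef_block₁₁' {k : Type*} [Fintype k] [DecidableEq k]
    {M11 M12 M21 M22 : Matrix k k ℂ}
    (h : (Matrix.fromBlocks M11 M12 M21 M22).PosDef) : M11.PosDef := by
  rw [posDef_iff_dotProduct_mulVec]
  constructor
  · have h1 := h.1.eq
    rw [fromBlocks_conjTranspose] at h1
    have h2 := congrArg Matrix.toBlocks₁₁ h1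
    simpa [toBlocks_fromBlocks₁₁, IsHermitian] using h2
  · intro x hx
    have hz : (Sum.elim x (0 : k → ℂ)) ≠ 0 := by
      intro hc; exact hx (funext fun i => congrFun hc (Sum.inl i))
    have := h.dotProduct_mulVec_pos hz
    simpa [star_sum_elim', fromBlocks_mulVec, sumElim_dotProduct_sumElim] using this

private lemma posDef_block₂₂' {k : Type*} [Fintype k] [DecidableEq k]
    {M11 M12 M21 M22 : Matrix k k ℂ}
    (h : (Matrix.fromBlocks M11 M12 M21 M22).PosDef) : M22.PosDef := by
  rw [posDef_iff_dotProduct_mulVec]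
  constructor
  · have h1 := h.1.eq
    rw [fromBlocks_conjTranspose] at h1
    have h2 := congrArg Matrix.toBlocks₂₂ h1
    simpa [toBlocks_fromBlocks₂₂, IsHermitian] using h2
  · intro x hx
    have hz : (Sum.elim (0 : k → ℂ) x) ≠ 0 := by
      intro hc; exact hx (funext fun i => congrFun hc (Sum.inr i))
    have := h.dotProduct_mulVec_pos hz
    simpa [star_sum_elim', fromBlocks_mulVec, sumElim_dotProduct_sumElim] using this

private lemma posDef_map_ofReal' {k : Type*} [Fintype k] {M : Matrix k k ℝ}
    (hM : M.PosDef) : (M.map (Complex.ofReal ·)).PosDef := by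
  rw [posDef_iff_dotProduct_mulVec]
  constructor
  · exact hM.1.map _ (fun r => by simp)
  · intro zv hzv
    set a : k → ℝ := fun i => (zv i).re with ha
    set b : k → ℝ := fun i => (zv i).im with hb
    have key : star zv ⬝ᵥ (M.map (Complex.ofReal ·)) *ᵥ zv
        = Complex.ofReal (a ⬝ᵥ M *ᵥ a + b ⬝ᵥ M *ᵥ b)
          + Complex.I * Complex.ofReal (a ⬝ᵥ M *ᵥ b - b ⬝ᵥ M *ᵥ a) := by
      simp only [dotProduct, mulVec, map_apply, Pi.star_apply, Finset.mul_sum,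
        Finset.sum_mul, Complex.ofReal_sum, Complex.ofReal_add, Complex.ofReal_sub]
      rw [← Finset.sum_sub_distrib, Finset.mul_sum, ← Finset.sum_add_distrib,
        ← Finset.sum_add_distrib]
      refine Finset.sum_congr rfl fun i _ => ?_
      rw [← Finset.sum_sub_distrib, Finset.mul_sum, ← Finset.sum_add_distrib,
        ← Finset.sum_add_distrib]
      refine Finset.sum_congr rfl fun j _ => ?_
      have h1 : zv i = Complex.ofReal (a i) + Complex.ofReal (b i) * Complex.I := by
        simp [ha, hb]
      have h2 : zv j = Complex.ofReal (a j) + Complex.ofReal (b j) * Complex.I := by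
        simp [ha, hb]
      rw [h1, h2]
      simp only [star_add, star_mul', Complex.star_def, map_add, _root_.map_mul,
        Complex.conj_ofReal, Complex.conj_I]
      push_cast
      ring_nf
      rw [Complex.I_sq]
      ring
    have hMt : ∀ i j, M i j = M j i := by
      intro i j
      have := congrFun (congrFun hM.1.eq j) i
      simpa using this
    have hsymm : a ⬝ᵥ M *ᵥ b - b ⬝ᵥ M *ᵥ a = 0 := by
      have : a ⬝ᵥ M *ᵥ b = b ⬝ᵥ M *ᵥ a := by
        simp only [dotProduct, mulVec, Finset.mul_sum]
        rw [Finset.sum_comm]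
        exact Finset.sum_congr rfl fun i _ => Finset.sum_congr rfl fun j _ => by
          rw [hMt j i]; ring
      rw [this, sub_self]
    have hane : a ≠ 0 ∨ b ≠ 0 := by
      by_contra hc
      push_neg at hc
      apply hzv
      funext i
      have h1 := congrFun hc.1 i
      have h2 := congrFun hc.2 i
      simp only [ha, hb, Pi.zero_apply] at h1 h2
      exact Complex.ext h1 h2
    have hpos : 0 < a ⬝ᵥ M *ᵥ a + b ⬝ᵥ M *ᵥ b := by
      rcases hane with h1 | h1
      · have h3 := hM.dotProduct_mulVec_pos h1
        have h2 := hM.posSemidef.dotProduct_mulVec_nonneg b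
        simp only [star_trivial] at h3 h2
        linarith
      · have h3 := hM.dotProduct_mulVec_pos h1
        have h2 := hM.posSemidef.dotProduct_mulVec_nonneg a
        simp only [star_trivial] at h3 h2
        linarith
    rw [key, hsymm]
    simp only [Complex.ofReal_zero, mul_zero, add_zero]
    exact Complex.zero_lt_real.mpr hpos

private lemma map_mul_ofReal' {k l m : Type*} [Fintype l] (X : Matrix k l ℝ) (Y : Matrix l m ℝ) :
    (X * Y).map (Complex.ofReal ·) = X.map (Complex.ofReal ·) * Y.map (Complex.ofReal ·) := by
  ext i j
  simp [mul_apply]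

/-- If the block LMI `[[P - EEᵀ, AR], [RᵀAᵀ, R + Rᵀ - P]] ≻ 0` is feasible for
some symmetric `P`, then `A` is Schur stable: all (complex) eigenvalues of `A`
lie strictly inside the unit disk. -/
theorem schur_stability_from_LMI
    (n z : ℕ) (A : Matrix (Fin n) (Fin n) ℝ) (E : Matrix (Fin n) (Fin z) ℝ)
    (P R : Matrix (Fin n) (Fin n) ℝ) (hP : Pᵀ = P)
    (h : (Matrix.fromBlocks (P - E * Eᵀ) (A * R) (Rᵀ * Aᵀ) (R + Rᵀ - P)).PosDef) :
    ∀ μ ∈ spectrum ℂ (A.map (Complex.ofReal ·)), ‖μ‖ < 1 := by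
  intro μ hμ
  set Ac := A.map (Complex.ofReal ·) with hAcdef
  set Pc := P.map (Complex.ofReal ·) with hPcdef
  set Rc := R.map (Complex.ofReal ·) with hRcdef
  set Ec := E.map (Complex.ofReal ·) with hEcdef
  -- eigenvector
  rw [spectrum.mem_iff] at hμ
  have hdet : (algebraMap ℂ (Matrix (Fin n) (Fin n) ℂ) μ - Ac).det = 0 := by
    by_contra hd
    exact hμ ((Matrix.isUnit_iff_isUnit_det _).mpr (Ne.isUnit hd))
  obtain ⟨v, hv0, hv⟩ := (Matrix.exists_mulVec_eq_zero_iff).mpr hdet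
  have hAv : Ac *ᵥ v = μ • v := by
    rw [Algebra.algebraMap_eq_smul_one, sub_mulVec, smul_mulVec, one_mulVec] at hv
    exact (sub_eq_zero.mp hv).symm
  -- complex block PD
  have hQ : (Matrix.fromBlocks (Pc - Ec * Ecᵀ) (Ac * Rc) (Rcᵀ * Acᵀ) (Rc + Rcᵀ - Pc)).PosDef := by
    have hmap := posDef_map_ofReal' h
    rw [Matrix.fromBlocks_map] at hmap
    have e11 : (P - E * Eᵀ).map (Complex.ofReal ·) = Pc - Ec * Ecᵀ := by
      rw [Matrix.map_sub _ (fun a b => Complex.ofReal_sub a b), map_mul_ofReal',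
        Matrix.transpose_map]
    have e12 : (A * R).map (Complex.ofReal ·) = Ac * Rc := map_mul_ofReal' A R
    have e21 : (Rᵀ * Aᵀ).map (Complex.ofReal ·) = Rcᵀ * Acᵀ := by
      rw [map_mul_ofReal', Matrix.transpose_map, Matrix.transpose_map]
    have e22 : (R + Rᵀ - P).map (Complex.ofReal ·) = Rc + Rcᵀ - Pc := by
      rw [Matrix.map_sub _ (fun a b => Complex.ofReal_sub a b),
        Matrix.map_add _ (fun a b => Complex.ofReal_add a b), Matrix.transpose_map]
    rw [e11, e12, e21, e22] at hmap
    exact hmap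
  have hPD11 := posDef_block₁₁' hQ
  have hPD22 := posDef_block₂₂' hQ
  -- Pc pos def
  have hEcH : Ecᴴ = Ecᵀ := by
    ext i j
    simp [hEcdef, conjTranspose_apply, Complex.conj_ofReal]
  have hPc : Pc.PosDef := by
    have hpsd : (Ec * Ecᵀ).PosSemidef := by
      rw [← hEcH]; exact posSemidef_self_mul_conjTranspose Ec
    have := hPD11.add_posSemidef hpsd
    simp only [sub_add_cancel] at this
    exact this
  have hPcsym : Pcᵀ = Pc := by
    rw [hPcdef, ← Matrix.transpose_map, hP]
  -- Rc invertible
  have hRinj : ∀ u : Fin n → ℂ, Rc *ᵥ u = 0 → u = 0 := by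
    intro u hu
    by_contra hu0
    have h22 := hPD22.dotProduct_mulVec_pos hu0
    have hRt : star u ⬝ᵥ Rcᵀ *ᵥ u = 0 := by
      rw [dotProduct_mulVec, vecMul_transpose, hRcdef, star_map_ofReal', ← hRcdef, hu]
      simp
    rw [sub_mulVec, add_mulVec, dotProduct_sub, dotProduct_add, hu, dotProduct_zero, hRt] at h22
    have hp := hPc.dotProduct_mulVec_pos hu0
    have : (0 : ℂ) < 0 := by
      have := add_pos h22 hp
      simpa using this
    exact lt_irrefl _ this
  have hRdet : IsUnit Rc.det := by
    by_contra hd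
    have hd0 : Rc.det = 0 := by
      by_contra hne; exact hd (Ne.isUnit hne)
    obtain ⟨u, hu0, hu⟩ := (Matrix.exists_mulVec_eq_zero_iff).mpr hd0
    exact hu0 (hRinj u hu)
  have hPdet : IsUnit Pc.det := (Matrix.isUnit_iff_isUnit_det _).mp hPc.isUnit
  -- vectors
  set y := Rc⁻¹ *ᵥ v with hydef
  set w := Pc⁻¹ *ᵥ v with hwdef
  have hRy : Rc *ᵥ y = v := by
    rw [hydef, mulVec_mulVec, Matrix.mul_nonsing_inv _ hRdet, one_mulVec]
  have hPw : Pc *ᵥ w = v := by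
    rw [hwdef, mulVec_mulVec, Matrix.mul_nonsing_inv _ hPdet, one_mulVec]
  have hy0 : y ≠ 0 := fun hy => hv0 (by rw [← hRy, hy, mulVec_zero])
  have hw0 : w ≠ 0 := fun hw => hv0 (by rw [← hPw, hw, mulVec_zero])
  set x := -(μ • w) with hxdef
  have hσpos : (0 : ℂ) < star w ⬝ᵥ v := by
    have := hPc.dotProduct_mulVec_pos hw0
    rwa [hPw] at this
  -- main quadratic inequality
  have hz0 : Sum.elim x y ≠ 0 := by
    intro hc; exact hy0 (funext fun i => congrFun hc (Sum.inr i))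
  have hq := hQ.dotProduct_mulVec_pos hz0
  rw [fromBlocks_mulVec, star_sum_elim', sumElim_dotProduct_sumElim] at hq
  simp only [Sum.elim_comp_inl, Sum.elim_comp_inr] at hq
  -- compute pieces
  have hstarx : star x = -(star μ • star w) := by
    rw [hxdef, star_neg, star_smul]
  have hxv : star x ⬝ᵥ (μ • v) = -((star μ * μ) * (star w ⬝ᵥ v)) := by
    rw [hstarx, neg_dotProduct, smul_dotProduct, dotProduct_smul]
    simp [smul_eq_mul]; ring
  have hPx : Pc *ᵥ x = -(μ • v) := by
    rw [hxdef, mulVec_neg, mulVec_smul, hPw]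
  have hxPx : star x ⬝ᵥ (Pc *ᵥ x) = (star μ * μ) * (star w ⬝ᵥ v) := by
    rw [hstarx, hPx, neg_dotProduct, dotProduct_neg, neg_neg, smul_dotProduct, dotProduct_smul]
    simp [smul_eq_mul]; ring
  have hARy : (Ac * Rc) *ᵥ y = μ • v := by
    rw [← mulVec_mulVec, hRy, hAv]
  have hA1 : star x ⬝ᵥ ((Pc - Ec * Ecᵀ) *ᵥ x + (Ac * Rc) *ᵥ y)
      = -(star x ⬝ᵥ ((Ec * Ecᵀ) *ᵥ x)) := by
    rw [dotProduct_add, hARy, hxv, sub_mulVec, dotProduct_sub, hxPx]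
    ring
  -- second row piece
  have hRtu : ∀ u : Fin n → ℂ, star y ⬝ᵥ (Rcᵀ *ᵥ u) = star v ⬝ᵥ u := by
    intro u
    rw [dotProduct_mulVec, vecMul_transpose, hRcdef, star_map_ofReal', ← hRcdef, hRy]
  have hAtx : star v ⬝ᵥ (Acᵀ *ᵥ x) = -((star μ * μ) * (star v ⬝ᵥ w)) := by
    rw [dotProduct_mulVec, vecMul_transpose, hAcdef, star_map_ofReal', ← hAcdef, hAv,
      star_smul, smul_dotProduct, hxdef, dotProduct_neg, dotProduct_smul]
    simp [smul_eq_mul]; ring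
  have hD : star y ⬝ᵥ ((Rcᵀ * Acᵀ) *ᵥ x + (Rc + Rcᵀ - Pc) *ᵥ y)
      = -((star μ * μ) * (star v ⬝ᵥ w)) + (star y ⬝ᵥ v + star v ⬝ᵥ y
          - star y ⬝ᵥ (Pc *ᵥ y)) := by
    rw [dotProduct_add, ← mulVec_mulVec, hRtu, hAtx, sub_mulVec, add_mulVec, dotProduct_sub,
      dotProduct_add]
    rw [hRy, hRtu y]
  rw [hA1, hD] at hq
  -- completing the square
  have hwPy : star w ⬝ᵥ (Pc *ᵥ y) = star v ⬝ᵥ y := by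
    rw [dotProduct_mulVec, ← hPcsym, vecMul_transpose, hPcdef, star_map_ofReal', ← hPcdef, hPw]
  have hsq := hPc.posSemidef.dotProduct_mulVec_nonneg (y - w)
  rw [star_sub, mulVec_sub, hPw, sub_dotProduct, dotProduct_sub, dotProduct_sub, hwPy] at hsq
  have epos : (0:ℂ) ≤ star x ⬝ᵥ ((Ec * Ecᵀ) *ᵥ x) := by
    have hpsd : (Ec * Ecᵀ).PosSemidef := by
      rw [← hEcH]; exact posSemidef_self_mul_conjTranspose Ec
    exact hpsd.dotProduct_mulVec_nonneg x
  have final : (0:ℂ) < star w ⬝ᵥ v - (star μ * μ) * (star v ⬝ᵥ w) := by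
    have s1 := add_pos_of_pos_of_nonneg hq hsq
    have s2 := add_pos_of_pos_of_nonneg s1 epos
    convert s2 using 1
    ring
  have hσ' : star v ⬝ᵥ w = star w ⬝ᵥ v := by
    rw [star_dotProduct]
    exact IsSelfAdjoint.of_nonneg hσpos.le
  rw [hσ'] at final
  have hmc : star μ * μ = (Complex.normSq μ : ℂ) := by
    rw [Complex.star_def, mul_comm, Complex.mul_conj]
  rw [hmc] at final
  have hre := (Complex.lt_def.mp final).1
  have hσre := (Complex.lt_def.mp hσpos).1
  simp only [Complex.zero_re, Complex.sub_re, Complex.re_ofReal_mul] at hre hσre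
  have hn : Complex.normSq μ < 1 := by nlinarith
  have habs : ‖μ‖^2 = Complex.normSq μ := by
    rw [Complex.sq_norm]
  nlinarith [norm_nonneg μ]
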